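/- Define V : ℝ → ℝ by V(x) = (e^{2x} + 4e^x − 4x·e^x − 2x − 5)/(4x⁴) for x ≠ 0 and V(0) = 1/24. Then V is continuous on ℝ and V(x) > 0 for every x ∈ ℝ; moreover, (2|x|)³·V(x) → 4 as x → −∞, and (2x)⁴·e^{−2x}·V(x) → 4 as x → +∞. -/

import Mathlib

open Filter

open Topology Real
noncomputable def NN (x : ℝ) : ℝ := Real.exp (2*x) + 4*Real.exp x - 4*x*Real.exp x - 2*x - 5
noncomputable def N1 (x : ℝ) : ℝ := 2*Real.exp (2*x) - 4*x*Real.exp x - 2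
noncomputable def N2 (x : ℝ) : ℝ := 4*Real.exp (2*x) - 4*Real.exp x - 4*x*Real.exp x
noncomputable def N3 (x : ℝ) : ℝ := 8*Real.exp (2*x) - 8*Real.exp x - 4*x*Real.exp x
noncomputable def N4 (x : ℝ) : ℝ := 16*Real.exp (2*x) - 12*Real.exp x - 4*x*Real.exp x

lemma h2x (x : ℝ) : HasDerivAt (fun x : ℝ => 2*x) 2 x := by
  simpa using (hasDerivAt_id x).const_mul (2:ℝ)

lemma he2 (x : ℝ) : HasDerivAt (fun x : ℝ => Real.exp (2*x)) (2*Real.exp (2*x)) x := by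
  have h := (Real.hasDerivAt_exp (2*x)).comp x (h2x x)
  convert h using 1
  all_goals first | rfl | ring

lemma hxe (x : ℝ) : HasDerivAt (fun x : ℝ => 4*x*Real.exp x) (4*Real.exp x + 4*x*Real.exp x) x := by
  have h := ((hasDerivAt_id x).const_mul (4:ℝ)).mul (Real.hasDerivAt_exp x)
  simp at h; exact h

lemma hasDerivAt_NN (x : ℝ) : HasDerivAt NN (N1 x) x := by
  have h := ((((he2 x).add ((Real.hasDerivAt_exp x).const_mul 4)).sub (hxe x)).sub (h2x x)).sub_const 5
  convert h using 1
  all_goals first | rfl | (unfold N1; ring)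

lemma hasDerivAt_N1 (x : ℝ) : HasDerivAt N1 (N2 x) x := by
  have h := (((he2 x).const_mul 2).sub (hxe x)).sub_const 2
  convert h using 1
  all_goals first | rfl | (unfold N2; ring)

lemma hasDerivAt_N2 (x : ℝ) : HasDerivAt N2 (N3 x) x := by
  have h := (((he2 x).const_mul 4).sub ((Real.hasDerivAt_exp x).const_mul 4)).sub (hxe x)
  convert h using 1
  all_goals first | rfl | (unfold N3; ring)

lemma hasDerivAt_N3 (x : ℝ) : HasDerivAt N3 (N4 x) x := by
  have h := (((he2 x).const_mul 8).sub ((Real.hasDerivAt_exp x).const_mul 8)).sub (hxe x)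
  convert h using 1
  all_goals first | rfl | (unfold N4; ring)

lemma contNN : Continuous NN := by unfold NN; fun_prop
lemma contN1 : Continuous N1 := by unfold N1; fun_prop
lemma contN2 : Continuous N2 := by unfold N2; fun_prop
lemma contN3 : Continuous N3 := by unfold N3; fun_prop
lemma contN4 : Continuous N4 := by unfold N4; fun_prop

lemma tendsto_zero_of (f : ℝ → ℝ) (hf : Continuous f) (h0 : f 0 = 0) :
    Tendsto f (𝓝[≠] (0:ℝ)) (𝓝 0) := by
  simpa [h0] using (hf.tendsto 0).mono_left nhdsWithin_le_nhds

lemma key_lim : Tendsto (fun x : ℝ => NN x / x ^ 4) (𝓝[≠] (0:ℝ)) (𝓝 (1/6)) := by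
  have hne : ∀ᶠ x in 𝓝[≠] (0:ℝ), x ≠ 0 := eventually_mem_nhdsWithin
  have step4 : Tendsto (fun x : ℝ => N3 x / (24 * x)) (𝓝[≠] (0:ℝ)) (𝓝 (1/6)) := by
    apply HasDerivAt.lhopital_zero_nhdsNE (f' := N4) (g' := fun _ => (24:ℝ))
    · exact Eventually.of_forall fun x => hasDerivAt_N3 x
    · exact Eventually.of_forall fun x => by simpa using (hasDerivAt_id x).const_mul (24:ℝ)
    · exact Eventually.of_forall fun x => by norm_num
    · exact tendsto_zero_of _ contN3 (by norm_num [N3])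
    · exact tendsto_zero_of _ (by fun_prop) (by simp)
    · have h16 : N4 0 / 24 = (1/6:ℝ) := by norm_num [N4]
      rw [← h16]
      exact ((contN4.tendsto 0).div_const 24).mono_left nhdsWithin_le_nhds
  have step3 : Tendsto (fun x : ℝ => N2 x / (12 * x ^ 2)) (𝓝[≠] (0:ℝ)) (𝓝 (1/6)) := by
    apply HasDerivAt.lhopital_zero_nhdsNE (f' := N3) (g' := fun x => 24 * x)
    · exact Eventually.of_forall fun x => hasDerivAt_N2 x
    · refine Eventually.of_forall fun x => ?_
      have h := ((hasDerivAt_pow 2 x).const_mul (12:ℝ))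
      convert h using 1 <;> norm_num <;> first | rfl | ring
    · filter_upwards [hne] with x hx; positivity
    · exact tendsto_zero_of _ contN2 (by norm_num [N2])
    · exact tendsto_zero_of _ (by fun_prop) (by simp)
    · exact step4
  have step2 : Tendsto (fun x : ℝ => N1 x / (4 * x ^ 3)) (𝓝[≠] (0:ℝ)) (𝓝 (1/6)) := by
    apply HasDerivAt.lhopital_zero_nhdsNE (f' := N2) (g' := fun x => 12 * x ^ 2)
    · exact Eventually.of_forall fun x => hasDerivAt_N1 x
    · refine Eventually.of_forall fun x => ?_
      have h := ((hasDerivAt_pow 3 x).const_mul (4:ℝ))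
      convert h using 1 <;> norm_num <;> first | rfl | ring
    · filter_upwards [hne] with x hx; positivity
    · exact tendsto_zero_of _ contN1 (by norm_num [N1])
    · exact tendsto_zero_of _ (by fun_prop) (by simp)
    · exact step3
  apply HasDerivAt.lhopital_zero_nhdsNE (f' := N1) (g' := fun x => 4 * x ^ 3)
  · exact Eventually.of_forall fun x => hasDerivAt_NN x
  · refine Eventually.of_forall fun x => ?_
    have h := hasDerivAt_pow 4 x
    convert h using 1 <;> norm_num <;> first | rfl | ring
  · filter_upwards [hne] with x hx; positivity
  · exact tendsto_zero_of _ contNN (by norm_num [NN])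
  · exact tendsto_zero_of _ (by fun_prop) (by simp)
  · exact step2

lemma NN_pos {x : ℝ} (hx : x ≠ 0) : 0 < NN x := by
  have hN2pos : ∀ y : ℝ, y ≠ 0 → 0 < N2 y := by
    intro y hy
    have h := Real.add_one_lt_exp hy
    have he : N2 y = 4 * Real.exp y * (Real.exp y - 1 - y) := by
      unfold N2; rw [show (2:ℝ)*y = y + y by ring, Real.exp_add]; ring
    rw [he]
    have hp := Real.exp_pos y
    nlinarith
  have hN10 : N1 0 = 0 := by norm_num [N1]
  have hNN0 : NN 0 = 0 := by norm_num [NN]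
  have hmono1 : StrictMonoOn N1 (Set.Ici 0) := by
    apply strictMonoOn_of_deriv_pos (convex_Ici 0) contN1.continuousOn
    intro y hy
    rw [interior_Ici] at hy
    rw [(hasDerivAt_N1 y).deriv]
    exact hN2pos y (ne_of_gt hy)
  have hmono1' : StrictMonoOn N1 (Set.Iic 0) := by
    apply strictMonoOn_of_deriv_pos (convex_Iic 0) contN1.continuousOn
    intro y hy
    rw [interior_Iic] at hy
    rw [(hasDerivAt_N1 y).deriv]
    exact hN2pos y (ne_of_lt hy)
  rcases lt_or_gt_of_ne hx with h | h
  · have hanti : StrictAntiOn NN (Set.Iic 0) := by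
      apply strictAntiOn_of_deriv_neg (convex_Iic 0) contNN.continuousOn
      intro y hy
      rw [interior_Iic] at hy
      rw [(hasDerivAt_NN y).deriv]
      have := hmono1' (Set.mem_Iic.mpr hy.le) (Set.mem_Iic.mpr le_rfl) hy
      rwa [hN10] at this
    have := hanti (Set.mem_Iic.mpr h.le) (Set.mem_Iic.mpr le_rfl) h
    rwa [hNN0] at this
  · have hmono : StrictMonoOn NN (Set.Ici 0) := by
      apply strictMonoOn_of_deriv_pos (convex_Ici 0) contNN.continuousOn
      intro y hy
      rw [interior_Ici] at hy
      rw [(hasDerivAt_NN y).deriv]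
      have := hmono1 (Set.mem_Ici.mpr le_rfl) (Set.mem_Ici.mpr hy.le) hy
      rwa [hN10] at this
    have := hmono (Set.mem_Ici.mpr le_rfl) (Set.mem_Ici.mpr h.le) h
    rwa [hNN0] at this

/-- Properties of `V(x) = (e^{2x} + 4e^x - 4x e^x - 2x - 5)/(4x⁴)`
(with `V(0) = 1/24`): continuity, positivity, `(2|x|)³ V(x) → 4` as `x → -∞`, and
`(2x)⁴ e^{-2x} V(x) → 4` as `x → +∞`. -/
theorem stmt_17 (V : ℝ → ℝ)
    (hV : ∀ x : ℝ, x ≠ 0 → V x =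
      (Real.exp (2 * x) + 4 * Real.exp x - 4 * x * Real.exp x - 2 * x - 5) / (4 * x ^ 4))
    (hV0 : V 0 = 1 / 24) :
    Continuous V ∧ (∀ x : ℝ, 0 < V x) ∧
      Tendsto (fun x : ℝ => (2 * |x|) ^ 3 * V x) atBot (nhds 4) ∧
      Tendsto (fun x : ℝ => (2 * x) ^ 4 * Real.exp (-(2 * x)) * V x) atTop (nhds 4) := by
  have hVN : ∀ x : ℝ, x ≠ 0 → V x = NN x / (4 * x ^ 4) := fun x hx => hV x hx
  refine ⟨?_, ?_, ?_, ?_⟩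
  · rw [continuous_iff_continuousAt]
    intro x₀
    rcases eq_or_ne x₀ 0 with rfl | hx₀
    · rw [ContinuousAt, hV0]
      rw [← nhdsNE_sup_pure 0, tendsto_sup]
      constructor
      · have h := key_lim.div_const 4
        have h4 : (1:ℝ)/6/4 = 1/24 := by norm_num
        rw [h4] at h
        refine Tendsto.congr' ?_ h
        filter_upwards [eventually_mem_nhdsWithin] with y (hy : y ≠ (0:ℝ))
        rw [hVN y hy, div_div, mul_comm]
      · simpa [hV0] using tendsto_pure_nhds V 0
    · have hopen : {x : ℝ | x ≠ 0} ∈ 𝓝 x₀ := isOpen_compl_singleton.mem_nhds hx₀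
      have hc : ContinuousAt (fun x => NN x / (4 * x ^ 4)) x₀ := by
        apply ContinuousAt.div contNN.continuousAt (by fun_prop)
        positivity
      apply hc.congr
      filter_upwards [hopen] with y hy
      exact (hVN y hy).symm
  · intro x
    rcases eq_or_ne x 0 with rfl | hx
    · rw [hV0]; norm_num
    · rw [hVN x hx]
      apply div_pos (NN_pos hx)
      positivity
  · have he : Tendsto Real.exp atBot (𝓝 0) := Real.tendsto_exp_atBot
    have hi : Tendsto (fun x : ℝ => x⁻¹) atBot (𝓝 0) := by
      have h := (tendsto_inv_atTop_zero (𝕜 := ℝ)).comp tendsto_neg_atBot_atTop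
      have h2 := h.neg
      simpa [Function.comp_def, inv_neg, neg_neg] using h2
    have hlim : Tendsto (fun x : ℝ =>
        -2 * Real.exp x ^ 2 * x⁻¹ + -8 * Real.exp x * x⁻¹ + 8 * Real.exp x + 10 * x⁻¹ + 4)
        atBot (𝓝 (-2 * (0:ℝ) ^ 2 * 0 + -8 * 0 * 0 + 8 * 0 + 10 * 0 + 4)) := by
      exact (((((he.pow 2).const_mul (-2)).mul hi).add ((he.const_mul (-8)).mul hi)).add
        (he.const_mul 8)).add (hi.const_mul 10) |>.add tendsto_const_nhds
    norm_num at hlim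
    refine Tendsto.congr' ?_ hlim
    filter_upwards [eventually_lt_atBot (0:ℝ)] with x hx
    rw [hVN x (ne_of_lt hx), abs_of_neg hx]
    unfold NN
    rw [show Real.exp (2*x) = Real.exp x * Real.exp x by rw [← Real.exp_add, two_mul]]
    have hx' : x ≠ 0 := ne_of_lt hx
    field_simp
    ring
  · have he : Tendsto (fun x : ℝ => Real.exp (-x)) atTop (𝓝 0) :=
      Real.tendsto_exp_neg_atTop_nhds_zero
    have hxe : Tendsto (fun x : ℝ => x * Real.exp (-x)) atTop (𝓝 0) := by
      simpa using Real.tendsto_pow_mul_exp_neg_atTop_nhds_zero 1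
    have hlim : Tendsto (fun x : ℝ =>
        4 + 16 * Real.exp (-x) - 16 * (x * Real.exp (-x)) -
          8 * (x * Real.exp (-x) * Real.exp (-x)) - 20 * Real.exp (-x) ^ 2)
        atTop (𝓝 ((4:ℝ) + 16 * 0 - 16 * 0 - 8 * (0 * 0) - 20 * 0 ^ 2)) := by
      exact ((((tendsto_const_nhds.add (he.const_mul 16)).sub (hxe.const_mul 16)).sub
        ((hxe.mul he).const_mul 8)).sub ((he.pow 2).const_mul 20))
    norm_num at hlim
    refine Tendsto.congr' ?_ hlim
    filter_upwards [eventually_gt_atTop (0:ℝ)] with x hx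
    rw [hVN x (ne_of_gt hx)]
    unfold NN
    rw [show Real.exp (2*x) = Real.exp x * Real.exp x by rw [← Real.exp_add, two_mul],
        show -(2*x) = -x + -x by ring, Real.exp_add, Real.exp_neg]
    have hx' : x ≠ 0 := ne_of_gt hx
    have hex : Real.exp x ≠ 0 := Real.exp_ne_zero x
    field_simp
    ring
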